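/- Let A be a unital C*-algebra and let τ : A → A be a linear map with τ(ab) = τ(ba) for all a, b ∈ A. Suppose there exists an integer n₀ ≥ 2 with the following property: for every tracial state ρ on A, every ε > 0 and every finite family a₁, …, a_k ∈ A there exist n₀ mutually orthogonal, pairwise equivalent projections p₁, …, p_{n₀} in A with p₁ + ⋯ + p_{n₀} = 1 such that ‖p_i a_j − a_j p_i‖_{2,ρ} < ε for all 1 ≤ i ≤ n₀ and 1 ≤ j ≤ k. Then for every tracial state ρ on A, every ε > 0 and every finite family a₁, …, a_k ∈ A there exists a unitary u ∈ A such that τ(u) = 0 and ‖u a_j − a_j u‖_{2,ρ} < ε for all 1 ≤ j ≤ k. -/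

import Mathlib

open scoped ComplexOrder

lemma aux_sum_sq {A : Type*} [CStarAlgebra A] (ρ : A →L[ℂ] ℂ)
    (hpos : ∀ x : A, 0 ≤ ρ (star x * x)) {n : ℕ} (x : Fin n → A) :
    (ρ (star (∑ i, x i) * ∑ i, x i)).re ≤ n * ∑ i, (ρ (star (x i) * x i)).re := by
  have hSS : ρ (star (∑ i, x i) * ∑ i, x i) = ∑ i, ∑ j, ρ (star (x i) * x j) := by
    rw [star_sum, Finset.sum_mul_sum]
    simp [map_sum]
  have hterm : ∀ i j : Fin n, (ρ (star (x i - x j) * (x i - x j))).re =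
      (ρ (star (x i) * x i)).re - (ρ (star (x i) * x j)).re
        - (ρ (star (x j) * x i)).re + (ρ (star (x j) * x j)).re := by
    intro i j
    have hA : star (x i - x j) * (x i - x j) =
        star (x i) * x i - star (x i) * x j - (star (x j) * x i) + star (x j) * x j := by
      simp only [star_sub]
      noncomm_ring
    rw [hA]
    simp [map_sub, map_add]
  have hge : (0:ℝ) ≤ ∑ i, ∑ j, (ρ (star (x i - x j) * (x i - x j))).re := by
    refine Finset.sum_nonneg fun i _ => Finset.sum_nonneg fun j _ => ?_
    have := hpos (x i - x j)
    exact (Complex.le_def.mp this).1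
  have hsplit : ∑ i, ∑ j, (ρ (star (x i - x j) * (x i - x j))).re =
      2 * (n * ∑ i, (ρ (star (x i) * x i)).re) - 2 * (ρ (star (∑ i, x i) * ∑ i, x i)).re := by
    simp only [hterm]
    have hre : (ρ (star (∑ i, x i) * ∑ i, x i)).re = ∑ i, ∑ j, (ρ (star (x i) * x j)).re := by
      rw [hSS]; simp [Complex.re_sum]
    have hswap : ∑ i : Fin n, ∑ j : Fin n, (ρ (star (x j) * x i)).re
        = ∑ i : Fin n, ∑ j : Fin n, (ρ (star (x i) * x j)).re := Finset.sum_comm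
    simp only [Finset.sum_add_distrib, Finset.sum_sub_distrib, Finset.sum_const,
      Finset.card_univ, Fintype.card_fin, nsmul_eq_mul, hswap, ← hre, ← Finset.mul_sum]
    ring
  rw [hsplit] at hge
  linarith

/-- Theorem 3.3, (vii) ⇒ (viii), for tracial states and a tracial linear map `τ`. -/
theorem stmt_2 {A : Type*} [CStarAlgebra A]
    (τ : A →ₗ[ℂ] A)
    (hτtr : ∀ a b : A, τ (a * b) = τ (b * a))
    (h : ∃ n₀ : ℕ, 2 ≤ n₀ ∧ ∀ (ρ : A →L[ℂ] ℂ), ρ 1 = 1 →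
      (∀ x : A, 0 ≤ ρ (star x * x)) → (∀ a b : A, ρ (a * b) = ρ (b * a)) →
      ∀ (ε : ℝ), 0 < ε → ∀ (k : ℕ) (a : Fin k → A),
      ∃ p : Fin n₀ → A,
        (∀ i, star (p i) = p i ∧ p i * p i = p i) ∧
        (∀ i i', i ≠ i' → p i * p i' = 0) ∧
        (∀ i i', ∃ v : A, star v * v = p i ∧ v * star v = p i') ∧
        (∑ i, p i = 1) ∧
        (∀ (i : Fin n₀) (j : Fin k),
          Real.sqrt (ρ (star (p i * a j - a j * p i) * (p i * a j - a j * p i))).re < ε)) :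
    ∀ (ρ : A →L[ℂ] ℂ), ρ 1 = 1 → (∀ x : A, 0 ≤ ρ (star x * x)) →
      (∀ a b : A, ρ (a * b) = ρ (b * a)) →
      ∀ (ε : ℝ), 0 < ε → ∀ (k : ℕ) (a : Fin k → A),
      ∃ u : A, star u * u = 1 ∧ u * star u = 1 ∧ τ u = 0 ∧
        ∀ j : Fin k,
          Real.sqrt (ρ (star (u * a j - a j * u) * (u * a j - a j * u))).re < ε := by
  obtain ⟨n, hn2, hmain⟩ := h
  intro ρ hρ1 hρpos hρtr ε hε k a
  have hn0 : 0 < n := by omega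
  have hnR : (0:ℝ) < n := by exact_mod_cast hn0
  obtain ⟨p, hproj, horth, hequiv, hsum, hcomm⟩ :=
    hmain ρ hρ1 hρpos hρtr (ε / n) (by positivity) k a
  set ζ : ℂ := Complex.exp (2 * Real.pi * Complex.I / n) with hζdef
  have hprim : IsPrimitiveRoot ζ n := Complex.isPrimitiveRoot_exp n hn0.ne'
  have hζconj : (starRingEnd ℂ) ζ * ζ = 1 := by
    rw [hζdef, ← Complex.exp_conj, ← Complex.exp_add]
    have : (starRingEnd ℂ) (2 * (Real.pi:ℂ) * Complex.I / n)
        = -(2 * (Real.pi:ℂ) * Complex.I / n) := by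
      simp [map_div₀, map_ofNat, Complex.conj_I]
      ring
    rw [this, neg_add_cancel, Complex.exp_zero]
  have hζp : ∀ m : ℕ, (starRingEnd ℂ) (ζ ^ m) * ζ ^ m = 1 := by
    intro m
    rw [map_pow, ← mul_pow, hζconj, one_pow]
  have hgeom : ∑ i ∈ Finset.range n, ζ ^ i = 0 := hprim.geom_sum_eq_zero hn2
  set u : A := ∑ i : Fin n, ζ ^ (i : ℕ) • p i with hudef
  have hstaru : star u = ∑ i : Fin n, (starRingEnd ℂ) (ζ ^ (i : ℕ)) • p i := by
    rw [hudef, star_sum]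
    refine Finset.sum_congr rfl fun i _ => ?_
    rw [star_smul, (hproj i).1, RCLike.star_def]
  have hmul : ∀ c d : Fin n → ℂ,
      (∑ i : Fin n, c i • p i) * (∑ i : Fin n, d i • p i) = ∑ i : Fin n, (c i * d i) • p i := by
    intro c d
    rw [Finset.sum_mul_sum]
    refine Finset.sum_congr rfl fun i _ => ?_
    rw [Finset.sum_eq_single i]
    · rw [smul_mul_smul_comm, (hproj i).2]
    · intro j _ hj
      rw [smul_mul_smul_comm, horth i j (Ne.symm hj), smul_zero]
    · intro hi
      exact absurd (Finset.mem_univ i) hi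
  constructor
  · refine ⟨?_, ?_, ?_, ?_⟩
    · rw [hstaru, hudef, hmul]
      simp only [hζp, one_smul]
      exact hsum
    · rw [hstaru, hudef, hmul]
      have : ∀ i : Fin n, ζ ^ (i:ℕ) * (starRingEnd ℂ) (ζ ^ (i:ℕ)) = 1 := fun i => by
        rw [mul_comm]; exact hζp _
      simp only [this, one_smul]
      exact hsum
    · -- τ u = 0
      have hτp : ∀ i : Fin n, τ (p i) = τ (p ⟨0, hn0⟩) := by
        intro i
        obtain ⟨v, hv1, hv2⟩ := hequiv ⟨0, hn0⟩ i
        rw [← hv2, ← hv1, hτtr]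
      rw [hudef, map_sum]
      simp only [map_smul, hτp, ← Finset.sum_smul]
      rw [Fin.sum_univ_eq_sum_range (fun i => ζ ^ i) n, hgeom, zero_smul]
    · intro j
      set c : Fin n → A := fun i => p i * a j - a j * p i with hcdef
      set x : Fin n → A := fun i => ζ ^ (i:ℕ) • c i with hxdef
      have hux : u * a j - a j * u = ∑ i, x i := by
        rw [hudef, Finset.sum_mul, Finset.mul_sum, ← Finset.sum_sub_distrib]
        refine Finset.sum_congr rfl fun i _ => ?_
        rw [hxdef]
        simp only [smul_mul_assoc, mul_smul_comm, ← smul_sub]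
        rfl
      have hxc : ∀ i, ρ (star (x i) * x i) = ρ (star (c i) * c i) := by
        intro i
        rw [hxdef]
        simp only
        rw [star_smul, RCLike.star_def, smul_mul_smul_comm, hζp, one_smul]
      have hb := aux_sum_sq ρ hρpos x
      simp only [hxc] at hb
      rw [hux]
      rw [Real.sqrt_lt' hε]
      have hsumlt : ∑ i : Fin n, (ρ (star (c i) * c i)).re < ∑ _i : Fin n, (ε / n) ^ 2 := by
        refine Finset.sum_lt_sum_of_nonempty ⟨⟨0, hn0⟩, Finset.mem_univ _⟩ fun i _ => ?_
        exact Real.lt_sq_of_sqrt_lt (hcomm i j)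
      have hconst : ∑ _i : Fin n, (ε / n) ^ 2 = n * (ε / n) ^ 2 := by
        simp [Finset.sum_const, Finset.card_univ]
      have : (n:ℝ) * ∑ i : Fin n, (ρ (star (c i) * c i)).re < n * (n * (ε / n) ^ 2) := by
        rw [← hconst]
        exact mul_lt_mul_of_pos_left hsumlt hnR
      have heq : (n:ℝ) * ((n:ℝ) * (ε / n) ^ 2) = ε ^ 2 := by
        field_simp
      linarith
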